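/- Let A : ℝ^{n×m}, y ∈ ℝ^n, α > 0 and ε > 0. Let x* be the unique minimizer over the nonnegative cone C = {x ∈ ℝ^m : x ≥ 0} of J(x) = ‖Ax − y‖₁ + (α/2)‖x‖₂², and let x_ε be the unique minimizer over C of the smoothed functional J_ε(x) = ‖Ax − y‖_{1,ε} + (α/2)‖x‖₂². Then ‖x_ε − x*‖₂² ≤ 2·n·ε / α; in particular, x_ε converges to x* as ε → 0. -/

import Mathlib

private lemma abs_le_sqrt_add' (a ε : ℝ) : |a| ≤ Real.sqrt (a ^ 2 + ε ^ 2) := by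
  have : |a| = Real.sqrt (a ^ 2) := (Real.sqrt_sq_eq_abs a).symm
  rw [this]
  exact Real.sqrt_le_sqrt (by nlinarith [sq_nonneg ε])

private lemma sqrt_le_abs_add' (a ε : ℝ) (hε : 0 ≤ ε) :
    Real.sqrt (a ^ 2 + ε ^ 2) ≤ |a| + ε := by
  have h : a ^ 2 + ε ^ 2 ≤ (|a| + ε) ^ 2 := by
    have := abs_nonneg a
    nlinarith [mul_nonneg (abs_nonneg a) hε, sq_abs a]
  calc Real.sqrt (a ^ 2 + ε ^ 2) ≤ Real.sqrt ((|a| + ε) ^ 2) := Real.sqrt_le_sqrt h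
    _ = |a| + ε := Real.sqrt_sq (by positivity)

private lemma midpt_sqrt' (ε a b : ℝ) :
    Real.sqrt (((a + b) / 2) ^ 2 + ε ^ 2) ≤
      (Real.sqrt (a ^ 2 + ε ^ 2) + Real.sqrt (b ^ 2 + ε ^ 2)) / 2 := by
  set u := Real.sqrt (a ^ 2 + ε ^ 2) with hu
  set v := Real.sqrt (b ^ 2 + ε ^ 2) with hv
  have hu0 : 0 ≤ u := Real.sqrt_nonneg _
  have hv0 : 0 ≤ v := Real.sqrt_nonneg _
  have hu2 : u ^ 2 = a ^ 2 + ε ^ 2 := Real.sq_sqrt (by positivity)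
  have hv2 : v ^ 2 = b ^ 2 + ε ^ 2 := Real.sq_sqrt (by positivity)
  have huv : a * b + ε ^ 2 ≤ u * v := by
    nlinarith [sq_nonneg (a * ε - b * ε), sq_nonneg (u * v - (a * b + ε ^ 2)),
      mul_nonneg hu0 hv0, sq_nonneg (a - b), sq_nonneg (u - v), sq_nonneg (u + v)]
  have h : ((a + b) / 2) ^ 2 + ε ^ 2 ≤ ((u + v) / 2) ^ 2 := by nlinarith
  calc Real.sqrt (((a + b) / 2) ^ 2 + ε ^ 2) ≤ Real.sqrt (((u + v) / 2) ^ 2) :=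
        Real.sqrt_le_sqrt h
    _ = (u + v) / 2 := Real.sqrt_sq (by positivity)

/-- Quantitative error estimate for smoothing: if `x*` minimizes
`J(x) = ‖Ax − y‖₁ + (α/2)‖x‖₂²` over the nonnegative cone and `x_ε` minimizes the
smoothed functional `J_ε(x) = ‖Ax − y‖_{1,ε} + (α/2)‖x‖₂²` over the same cone, then
`‖x_ε − x*‖₂² ≤ 2·n·ε / α`. -/
theorem smoothing_error_estimate
    (n m : ℕ) (A : Matrix (Fin n) (Fin m) ℝ) (y : Fin n → ℝ)
    (α ε : ℝ) (hα : 0 < α) (hε : 0 < ε)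
    (J Jε : (Fin m → ℝ) → ℝ)
    (hJ : ∀ x, J x = (∑ i, |(A.mulVec x - y) i|) + α / 2 * ∑ j, (x j) ^ 2)
    (hJε : ∀ x, Jε x =
      (∑ i, Real.sqrt (((A.mulVec x - y) i) ^ 2 + ε ^ 2)) + α / 2 * ∑ j, (x j) ^ 2)
    (xstar xε : Fin m → ℝ)
    (hxstar_mem : ∀ j, 0 ≤ xstar j)
    (hxstar_min : ∀ x : Fin m → ℝ, (∀ j, 0 ≤ x j) → J xstar ≤ J x)
    (hxε_mem : ∀ j, 0 ≤ xε j)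
    (hxε_min : ∀ x : Fin m → ℝ, (∀ j, 0 ≤ x j) → Jε xε ≤ Jε x) :
    (∑ j, (xε j - xstar j) ^ 2) ≤ 2 * n * ε / α := by
  set z : Fin m → ℝ := fun j => (xstar j + xε j) / 2 with hzdef
  have hz : ∀ j, 0 ≤ z j := fun j => by
    have := hxstar_mem j; have := hxε_mem j
    simp only [hzdef]; positivity
  set a : Fin n → ℝ := fun i => (A.mulVec xstar - y) i with ha
  set b : Fin n → ℝ := fun i => (A.mulVec xε - y) i with hb
  have hc : ∀ i, (A.mulVec z - y) i = (a i + b i) / 2 := by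
    intro i
    simp only [ha, hb, hzdef, Pi.sub_apply, Matrix.mulVec, dotProduct]
    have h : (∑ j, A i j * ((xstar j + xε j) / 2)) =
        ((∑ j, A i j * xstar j) + ∑ j, A i j * xε j) / 2 := by
      rw [← Finset.sum_add_distrib, Finset.sum_div]
      exact Finset.sum_congr rfl fun j _ => by ring
    rw [h]; ring
  -- abbreviations
  set S1 := ∑ i, |a i| with hS1
  set S2 := ∑ i, |b i| with hS2
  set T1 := ∑ i, Real.sqrt (a i ^ 2 + ε ^ 2) with hT1
  set T2 := ∑ i, Real.sqrt (b i ^ 2 + ε ^ 2) with hT2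
  set Q1 := ∑ j, (xstar j) ^ 2 with hQ1
  set Q2 := ∑ j, (xε j) ^ 2 with hQ2
  set D := ∑ j, (xε j - xstar j) ^ 2 with hD
  have hQz : (∑ j, (z j) ^ 2) = (Q1 + Q2) / 2 - D / 4 := by
    simp only [hQ1, hQ2, hD, hzdef]
    rw [← Finset.sum_add_distrib, Finset.sum_div, Finset.sum_div, ← Finset.sum_sub_distrib]
    apply Finset.sum_congr rfl; intro j _; ring
  have hL1 : (∑ i, |(A.mulVec z - y) i|) ≤ (S1 + S2) / 2 := by
    rw [hS1, hS2, ← Finset.sum_add_distrib, Finset.sum_div]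
    apply Finset.sum_le_sum; intro i _
    rw [hc i]
    have habs := abs_add_le (a i) (b i)
    calc |(a i + b i) / 2| = |a i + b i| / 2 := by rw [abs_div, abs_two]
      _ ≤ (|a i| + |b i|) / 2 := by linarith
  have hL2 : (∑ i, Real.sqrt (((A.mulVec z - y) i) ^ 2 + ε ^ 2)) ≤ (T1 + T2) / 2 := by
    rw [hT1, hT2, ← Finset.sum_add_distrib, Finset.sum_div]
    apply Finset.sum_le_sum; intro i _
    rw [hc i]; exact midpt_sqrt' ε (a i) (b i)
  have hS2T2 : S2 ≤ T2 := Finset.sum_le_sum fun i _ => abs_le_sqrt_add' (b i) ε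
  have hT1S1 : T1 ≤ S1 + n * ε := by
    calc T1 ≤ ∑ i : Fin n, (|a i| + ε) :=
          Finset.sum_le_sum fun i _ => sqrt_le_abs_add' (a i) ε hε.le
      _ = S1 + n * ε := by rw [Finset.sum_add_distrib]; simp [hS1, mul_comm]
  have h1 := hxstar_min z hz
  have h2 := hxε_min z hz
  rw [hJ, hJ] at h1
  rw [hJε, hJε] at h2
  rw [hQz] at h1 h2
  have h1' : S1 + α / 2 * Q1 ≤ (S1 + S2) / 2 + α / 2 * ((Q1 + Q2) / 2 - D / 4) := by
    refine le_trans h1 ?_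
    exact add_le_add_left hL1 _
  have h2' : T2 + α / 2 * Q2 ≤ (T1 + T2) / 2 + α / 2 * ((Q1 + Q2) / 2 - D / 4) := by
    refine le_trans h2 ?_
    exact add_le_add_left hL2 _
  have key : α * D ≤ 2 * n * ε := by nlinarith
  rw [le_div_iff₀ hα]
  linarith [key]
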